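/- If W : I → O and W' : I → O' are discrete memoryless channels with W' a degradation of W (i.e., there exists a channel W'' : O → O' with W'(y|x) = Σ_{z∈O} W''(y|z) W(z|x)), then for every pair a,b ∈ I, the pairwise Bhattacharyya parameter satisfies Z_{a,b}(W) ≤ Z_{a,b}(W'), where Z_{a,b}(V) = Σ_y √(V(y|a)V(y|b)). -/
import Mathlib


/-- Degradation increases the pairwise Bhattacharyya parameter:
if `W'` is a degradation of `W`, then `Z_{a,b}(W) ≤ Z_{a,b}(W')` for all inputs `a, b`. -/
theorem pairwise_bhattacharyya_le_of_degraded
    {I O O' : Type*} [Fintype I] [Fintype O] [Fintype O']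
    (W : I → O → ℝ) (W' : I → O' → ℝ)
    (hW0 : ∀ x y, 0 ≤ W x y) (hW1 : ∀ x, ∑ y, W x y = 1)
    (hW'0 : ∀ x y, 0 ≤ W' x y) (hW'1 : ∀ x, ∑ y, W' x y = 1)
    (hdeg : ∃ W'' : O → O' → ℝ, (∀ z y, 0 ≤ W'' z y) ∧ (∀ z, ∑ y, W'' z y = 1) ∧
      ∀ x y, W' x y = ∑ z, W'' z y * W x z) :
    ∀ a b : I, ∑ z, Real.sqrt (W a z * W b z) ≤ ∑ y, Real.sqrt (W' a y * W' b y) := by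
  obtain ⟨W'', h0, h1, heq⟩ := hdeg
  intro a b
  have key : ∀ y, ∑ z, W'' z y * Real.sqrt (W a z * W b z) ≤
      Real.sqrt (W' a y * W' b y) := by
    intro y
    have hcs := Finset.sum_mul_sq_le_sq_mul_sq Finset.univ
      (fun z => Real.sqrt (W'' z y * W a z)) (fun z => Real.sqrt (W'' z y * W b z))
    have hrw : ∀ z, Real.sqrt (W'' z y * W a z) * Real.sqrt (W'' z y * W b z)
        = W'' z y * Real.sqrt (W a z * W b z) := by
      intro z
      rw [← Real.sqrt_mul (mul_nonneg (h0 z y) (hW0 a z)),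
        show W'' z y * W a z * (W'' z y * W b z)
        = (W'' z y)^2 * (W a z * W b z) by ring, Real.sqrt_mul (sq_nonneg _),
        Real.sqrt_sq (h0 z y)]
    have hsq : ∀ z, Real.sqrt (W'' z y * W a z) ^ 2 = W'' z y * W a z := fun z =>
      Real.sq_sqrt (mul_nonneg (h0 z y) (hW0 a z))
    have hsq' : ∀ z, Real.sqrt (W'' z y * W b z) ^ 2 = W'' z y * W b z := fun z =>
      Real.sq_sqrt (mul_nonneg (h0 z y) (hW0 b z))
    simp only [hrw, hsq, hsq'] at hcs
    rw [← heq, ← heq] at hcs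
    have hnn : 0 ≤ ∑ z, W'' z y * Real.sqrt (W a z * W b z) :=
      Finset.sum_nonneg fun z _ => mul_nonneg (h0 z y) (Real.sqrt_nonneg _)
    calc ∑ z, W'' z y * Real.sqrt (W a z * W b z)
        = Real.sqrt ((∑ z, W'' z y * Real.sqrt (W a z * W b z))^2) :=
          (Real.sqrt_sq hnn).symm
      _ ≤ Real.sqrt (W' a y * W' b y) := Real.sqrt_le_sqrt hcs
  calc ∑ z, Real.sqrt (W a z * W b z)
      = ∑ z, (∑ y, W'' z y) * Real.sqrt (W a z * W b z) := by
        simp [h1]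
    _ = ∑ y, ∑ z, W'' z y * Real.sqrt (W a z * W b z) := by
        rw [Finset.sum_comm]
        simp [Finset.sum_mul]
    _ ≤ ∑ y, Real.sqrt (W' a y * W' b y) :=
        Finset.sum_le_sum fun y _ => key y
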